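/- Let A, B, X, Y, C be random variables on a common probability space, each taking finitely many values. Then H[A,B] + 4H[A,X,Y] + H[B,X,Y] + H[A,C] + 2H[X,C] + 2H[Y,C] ≤ 3H[X,Y] + 3H[A,X] + 3H[A,Y] + H[B,X] + H[B,Y] + 5H[C]. -/

import Mathlib

/-- Shannon entropy (base 2) of the random variable `f` on a finite
probability space with mass function `p`. -/
noncomputable def entropy {Ω α : Type*} [Fintype Ω] (p : Ω → ℝ) (f : Ω → α) : ℝ :=
  letI := Classical.decEq α
  ∑ y ∈ Finset.univ.image f,
    -((∑ ω ∈ Finset.univ.filter (fun ω => f ω = y), p ω) *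
        Real.logb 2 (∑ ω ∈ Finset.univ.filter (fun ω => f ω = y), p ω))

noncomputable def mass {Ω α : Type*} [Fintype Ω] (p : Ω → ℝ) (f : Ω → α) (y : α) : ℝ :=
  letI := Classical.decEq α
  ∑ ω ∈ Finset.univ.filter (fun ω => f ω = y), p ω

section basic
variable {Ω α β γ : Type*} [Fintype Ω] (p : Ω → ℝ) (f : Ω → α)

lemma mass_nonneg (hp : ∀ ω, 0 ≤ p ω) (y : α) : 0 ≤ mass p f y := by
  unfold mass
  exact Finset.sum_nonneg fun ω _ => hp ω

lemma le_mass (hp : ∀ ω, 0 ≤ p ω) {ω : Ω} {y : α} (h : f ω = y) : p ω ≤ mass p f y := by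
  unfold mass
  exact Finset.single_le_sum (fun σ _ => hp σ) (by simp [h])

lemma mass_pos (hp : ∀ ω, 0 ≤ p ω) {ω : Ω} (hω : 0 < p ω) : 0 < mass p f (f ω) :=
  lt_of_lt_of_le hω (le_mass p f hp rfl)

lemma sum_mass [Fintype α] : ∑ y : α, mass p f y = ∑ ω, p ω := by
  letI := Classical.decEq α
  unfold mass
  exact Finset.sum_fiberwise Finset.univ f p

lemma mass_congr_fiber {g : Ω → β} {ω : Ω}
    (h : ∀ σ, f σ = f ω ↔ g σ = g ω) : mass p f (f ω) = mass p g (g ω) := by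
  letI := Classical.decEq α
  letI := Classical.decEq β
  unfold mass
  exact Finset.sum_congr (Finset.filter_congr fun σ _ => h σ) fun _ _ => rfl

lemma entropy_eq_sum_omega :
    entropy p f = ∑ ω, -(p ω * Real.logb 2 (mass p f (f ω))) := by
  letI := Classical.decEq α
  unfold entropy mass
  rw [← Finset.sum_fiberwise_of_maps_to (fun ω _ => Finset.mem_image_of_mem f (Finset.mem_univ ω))
      (fun ω => -(p ω * Real.logb 2 (∑ σ ∈ Finset.univ.filter (fun σ => f σ = f ω), p σ)))]
  refine Finset.sum_congr rfl fun y hy => ?_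
  rw [show ((∑ ω ∈ Finset.univ.filter (fun ω => f ω = y), p ω) *
        Real.logb 2 (∑ ω ∈ Finset.univ.filter (fun ω => f ω = y), p ω)) =
      ∑ ω ∈ Finset.univ.filter (fun ω => f ω = y),
        p ω * Real.logb 2 (∑ σ ∈ Finset.univ.filter (fun σ => f σ = y), p σ) from
    by rw [Finset.sum_mul], ← Finset.sum_neg_distrib]
  refine Finset.sum_congr rfl fun ω hω => ?_
  have hfω : f ω = y := (Finset.mem_filter.mp hω).2
  rw [show (Finset.univ.filter (fun σ => f σ = f ω)) = (Finset.univ.filter (fun σ => f σ = y)) from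
    Finset.filter_congr fun σ _ => by rw [hfω]]

lemma entropy_eq_sum_univ [Fintype α] :
    entropy p f = ∑ y : α, -(mass p f y * Real.logb 2 (mass p f y)) := by
  letI := Classical.decEq α
  unfold entropy mass
  refine Finset.sum_subset (Finset.subset_univ _) fun y _ hy => ?_
  rw [Finset.filter_false_of_mem fun ω _ (h : f ω = y) => hy (h ▸ Finset.mem_image_of_mem f (Finset.mem_univ ω)),
    Finset.sum_empty]
  simp

lemma entropy_congr_dist {Ω' : Type*} [Fintype Ω'] [Fintype α] (q : Ω' → ℝ) (g : Ω' → α)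
    (h : ∀ y, mass p f y = mass q g y) : entropy p f = entropy q g := by
  rw [entropy_eq_sum_univ, entropy_eq_sum_univ]
  exact Finset.sum_congr rfl fun y _ => by rw [h]

lemma entropy_relabel (g : Ω → β) (h : ∀ σ τ, f σ = f τ ↔ g σ = g τ) :
    entropy p f = entropy p g := by
  rw [entropy_eq_sum_omega, entropy_eq_sum_omega]
  exact Finset.sum_congr rfl fun ω _ => by
    rw [mass_congr_fiber p f (fun σ => h σ ω)]

end basic

section marginal
variable {Ω α β γ : Type*} [Fintype Ω] (p : Ω → ℝ)

lemma mass_fst_marginal [Fintype α] (f : Ω → α) (g : Ω → β) (b : β) :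
    ∑ a : α, mass p (fun ω => (f ω, g ω)) (a, b) = mass p g b := by
  letI := Classical.decEq α
  letI := Classical.decEq β
  letI := Classical.decEq (α × β)
  unfold mass
  rw [← Finset.sum_fiberwise_of_maps_to (s := Finset.univ.filter (fun ω => g ω = b))
      (t := (Finset.univ : Finset α)) (g := f) (fun ω _ => Finset.mem_univ (f ω)) p]
  refine Finset.sum_congr rfl fun a _ => Finset.sum_congr ?_ fun _ _ => rfl
  rw [Finset.filter_filter]
  exact Finset.filter_congr fun ω _ => by simp [Prod.ext_iff, and_comm]

lemma mass_snd_marginal [Fintype γ] (g : Ω → β) (h : Ω → γ) (b : β) :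
    ∑ c : γ, mass p (fun ω => (g ω, h ω)) (b, c) = mass p g b := by
  letI := Classical.decEq γ
  letI := Classical.decEq β
  letI := Classical.decEq (β × γ)
  unfold mass
  rw [← Finset.sum_fiberwise_of_maps_to (s := Finset.univ.filter (fun ω => g ω = b))
      (t := (Finset.univ : Finset γ)) (g := h) (fun ω _ => Finset.mem_univ (h ω)) p]
  refine Finset.sum_congr rfl fun c _ => Finset.sum_congr ?_ fun _ _ => rfl
  rw [Finset.filter_filter]
  exact Finset.filter_congr fun ω _ => by simp [Prod.ext_iff, and_comm]

end marginal

section submod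
variable {Ω α β γ : Type*} [Fintype Ω] [Fintype α] [Fintype β] [Fintype γ]

lemma entropy_submod (p : Ω → ℝ) (hp : ∀ ω, 0 ≤ p ω) (hp1 : ∑ ω, p ω = 1)
    (f : Ω → α) (g : Ω → β) (h : Ω → γ) :
    entropy p (fun ω => (f ω, g ω, h ω)) + entropy p g ≤
      entropy p (fun ω => (f ω, g ω)) + entropy p (fun ω => (g ω, h ω)) := by
  set fg : Ω → α × β := fun ω => (f ω, g ω) with hfg
  set gh : Ω → β × γ := fun ω => (g ω, h ω) with hgh
  set fgh : Ω → α × β × γ := fun ω => (f ω, g ω, h ω) with hfgh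
  set t : Ω → ℝ := fun ω =>
    mass p fg (fg ω) * mass p gh (gh ω) / (mass p fgh (fgh ω) * mass p g (g ω)) with ht
  have hlog2 : (0:ℝ) < Real.log 2 := Real.log_pos one_lt_two
  -- Step 2 : ∑ p * t ≤ 1
  have hS : (∑ ω, p ω * t ω) ≤ 1 := by
    letI := Classical.decEq (α × β × γ)
    have regroup : (∑ ω, p ω * t ω) = ∑ v : α × β × γ, mass p fgh v *
        (mass p fg (v.1, v.2.1) * mass p gh (v.2.1, v.2.2) / (mass p fgh v * mass p g v.2.1)) := by
      rw [← Finset.sum_fiberwise Finset.univ fgh (fun ω => p ω * t ω)]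
      refine Finset.sum_congr rfl fun v _ => ?_
      have const : ∀ ω ∈ Finset.univ.filter (fun ω => fgh ω = v), p ω * t ω =
          p ω * (mass p fg (v.1, v.2.1) * mass p gh (v.2.1, v.2.2) /
            (mass p fgh v * mass p g v.2.1)) := by
        intro ω hω
        have hv : fgh ω = v := (Finset.mem_filter.mp hω).2
        obtain ⟨h1, h2, h3⟩ : f ω = v.1 ∧ g ω = v.2.1 ∧ h ω = v.2.2 := by
          rw [hfgh] at hv; simpa [Prod.ext_iff] using hv
        have e1 : fg ω = (v.1, v.2.1) := by rw [hfg]; simp [h1, h2]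
        have e2 : gh ω = (v.2.1, v.2.2) := by rw [hgh]; simp [h2, h3]
        rw [ht]
        simp only
        rw [e1, e2, hv, h2]
      rw [Finset.sum_congr rfl const, ← Finset.sum_mul]
      rfl
    rw [regroup]
    have step2 : ∀ v : α × β × γ, mass p fgh v *
        (mass p fg (v.1, v.2.1) * mass p gh (v.2.1, v.2.2) / (mass p fgh v * mass p g v.2.1)) ≤
        mass p fg (v.1, v.2.1) * mass p gh (v.2.1, v.2.2) / mass p g v.2.1 := by
      intro v
      rcases eq_or_lt_of_le (mass_nonneg p fgh hp v) with hM | hM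
      · rw [← hM, zero_mul]
        exact div_nonneg (mul_nonneg (mass_nonneg p fg hp _) (mass_nonneg p gh hp _))
          (mass_nonneg p g hp _)
      · rcases eq_or_lt_of_le (mass_nonneg p g hp v.2.1) with hJ | hJ
        · rw [← hJ]
          simp
        · refine le_of_eq ?_
          field_simp
    calc (∑ v : α × β × γ, mass p fgh v *
          (mass p fg (v.1, v.2.1) * mass p gh (v.2.1, v.2.2) / (mass p fgh v * mass p g v.2.1)))
        ≤ ∑ v : α × β × γ, mass p fg (v.1, v.2.1) * mass p gh (v.2.1, v.2.2) / mass p g v.2.1 :=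
          Finset.sum_le_sum fun v _ => step2 v
      _ = ∑ b : β, (∑ a : α, mass p fg (a, b)) * (∑ c : γ, mass p gh (b, c)) / mass p g b := by
          rw [Fintype.sum_prod_type, Finset.sum_comm, Fintype.sum_prod_type]
          dsimp only
          simp only [Finset.sum_mul_sum, Finset.sum_div]
          exact Finset.sum_congr rfl fun b _ => Finset.sum_comm
      _ ≤ ∑ b : β, mass p g b := by
          refine Finset.sum_le_sum fun b _ => ?_
          rw [mass_fst_marginal p f g b, mass_snd_marginal p g h b]
          rcases eq_or_lt_of_le (mass_nonneg p g hp b) with hJ | hJ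
          · rw [← hJ, div_zero]
          · rw [mul_div_assoc, div_self hJ.ne', mul_one]
      _ = 1 := by rw [sum_mass]; exact hp1
  -- Step 1 : pointwise bound and conclusion
  rw [entropy_eq_sum_omega p fgh, entropy_eq_sum_omega p g, entropy_eq_sum_omega p fg,
    entropy_eq_sum_omega p gh, ← sub_nonneg]
  have e : ((∑ ω, -(p ω * Real.logb 2 (mass p fg (fg ω)))) +
        (∑ ω, -(p ω * Real.logb 2 (mass p gh (gh ω))))) -
      ((∑ ω, -(p ω * Real.logb 2 (mass p fgh (fgh ω)))) +
        (∑ ω, -(p ω * Real.logb 2 (mass p g (g ω))))) =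
      ∑ ω, p ω * (Real.logb 2 (mass p fgh (fgh ω)) + Real.logb 2 (mass p g (g ω)) -
        Real.logb 2 (mass p fg (fg ω)) - Real.logb 2 (mass p gh (gh ω))) := by
    rw [← Finset.sum_add_distrib, ← Finset.sum_add_distrib, ← Finset.sum_sub_distrib]
    exact Finset.sum_congr rfl fun ω _ => by ring
  rw [e]
  have key : ∀ ω, p ω * (1 - t ω) / Real.log 2 ≤
      p ω * (Real.logb 2 (mass p fgh (fgh ω)) + Real.logb 2 (mass p g (g ω)) -
        Real.logb 2 (mass p fg (fg ω)) - Real.logb 2 (mass p gh (gh ω))) := by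
    intro ω
    rcases eq_or_lt_of_le (hp ω) with h0 | hω
    · rw [← h0]; simp
    · have m1 : 0 < mass p fg (fg ω) := mass_pos p fg hp hω
      have m2 : 0 < mass p gh (gh ω) := mass_pos p gh hp hω
      have m3 : 0 < mass p fgh (fgh ω) := mass_pos p fgh hp hω
      have m4 : 0 < mass p g (g ω) := mass_pos p g hp hω
      have htpos : 0 < t ω := by
        rw [ht]; exact div_pos (mul_pos m1 m2) (mul_pos m3 m4)
      have hlt : Real.log (t ω) ≤ t ω - 1 := Real.log_le_sub_one_of_pos htpos
      have hlogt : Real.log (t ω) = Real.log (mass p fg (fg ω)) + Real.log (mass p gh (gh ω)) -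
          Real.log (mass p fgh (fgh ω)) - Real.log (mass p g (g ω)) := by
        rw [ht]
        simp only
        rw [Real.log_div (mul_pos m1 m2).ne' (mul_pos m3 m4).ne', Real.log_mul m1.ne' m2.ne',
          Real.log_mul m3.ne' m4.ne']
        ring
      calc p ω * (1 - t ω) / Real.log 2 ≤ p ω * -Real.log (t ω) / Real.log 2 := by
            have h1 : p ω * (1 - t ω) ≤ p ω * -Real.log (t ω) :=
              mul_le_mul_of_nonneg_left (by linarith) hω.le
            gcongr
        _ = p ω * (Real.logb 2 (mass p fgh (fgh ω)) + Real.logb 2 (mass p g (g ω)) -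
            Real.logb 2 (mass p fg (fg ω)) - Real.logb 2 (mass p gh (gh ω))) := by
            rw [hlogt]
            simp only [← Real.log_div_log]
            ring
  calc (0:ℝ) ≤ (1 - ∑ ω, p ω * t ω) / Real.log 2 := div_nonneg (by linarith) hlog2.le
    _ = ∑ ω, p ω * (1 - t ω) / Real.log 2 := by
        have e2 : ∑ ω, p ω * (1 - t ω) = 1 - ∑ ω, p ω * t ω := by
          calc ∑ ω, p ω * (1 - t ω) = ∑ ω, (p ω - p ω * t ω) :=
                Finset.sum_congr rfl fun ω _ => by ring
            _ = (∑ ω, p ω) - ∑ ω, p ω * t ω := Finset.sum_sub_distrib _ _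
            _ = 1 - ∑ ω, p ω * t ω := by rw [hp1]
        rw [← Finset.sum_div, e2]
    _ ≤ _ := Finset.sum_le_sum fun ω _ => key ω

end submod

section const
variable {Ω α β : Type*} [Fintype Ω] (p : Ω → ℝ)

lemma entropy_const (hp1 : ∑ ω, p ω = 1) : entropy p (fun _ => ()) = 0 := by
  letI := Classical.decEq Unit
  rw [entropy_eq_sum_univ]
  have hm : mass p (fun _ : Ω => ()) () = 1 := by
    unfold mass
    rw [Finset.filter_true_of_mem (by simp)]
    exact hp1
  simp [hm]

lemma entropy_subadd [Fintype α] [Fintype β] (hp : ∀ ω, 0 ≤ p ω) (hp1 : ∑ ω, p ω = 1)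
    (f : Ω → α) (h : Ω → β) :
    entropy p (fun ω => (f ω, h ω)) ≤ entropy p f + entropy p h := by
  have key := entropy_submod p hp hp1 f (fun _ => ()) h
  rw [entropy_const p hp1] at key
  have e1 : entropy p (fun ω => (f ω, (), h ω)) = entropy p (fun ω => (f ω, h ω)) :=
    entropy_relabel p _ _ (fun σ τ => by simp [Prod.ext_iff])
  have e2 : entropy p (fun ω => (f ω, ())) = entropy p f :=
    entropy_relabel p _ _ (fun σ τ => by simp [Prod.ext_iff])
  have e3 : entropy p (fun ω => ((), h ω)) = entropy p h :=
    entropy_relabel p _ _ (fun σ τ => by simp [Prod.ext_iff])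
  rw [e1, e2, e3] at key
  linarith

end const

section coupling
variable {Ω κ : Type*} [Fintype Ω] (p : Ω → ℝ) (W : Ω → κ)

noncomputable def cpl : Ω × Ω → ℝ := fun ω' =>
  letI := Classical.decEq κ
  if W ω'.1 = W ω'.2 then p ω'.1 * p ω'.2 / mass p W (W ω'.1) else 0

variable (hp : ∀ ω, 0 ≤ p ω) (hp1 : ∑ ω, p ω = 1)
include hp

lemma cpl_nonneg : ∀ ω', 0 ≤ cpl p W ω' := by
  intro ω'
  unfold cpl
  split
  · exact div_nonneg (mul_nonneg (hp _) (hp _)) (mass_nonneg p W hp _)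
  · exact le_refl 0

lemma mass_W_zero {ω : Ω} (h : mass p W (W ω) = 0) : p ω = 0 :=
  le_antisymm (h ▸ le_mass p W hp rfl) (hp ω)

lemma cpl_row (ω₁ : Ω) : ∑ ω₂, cpl p W (ω₁, ω₂) = p ω₁ := by
  letI := Classical.decEq κ
  unfold cpl
  rw [← Finset.sum_filter]
  by_cases hM : mass p W (W ω₁) = 0
  · have hz : p ω₁ = 0 := mass_W_zero p W hp hM
    simp [hz]
  · have hfil : ∑ ω₂ ∈ Finset.univ.filter (fun ω₂ => W ω₁ = W ω₂), p ω₁ * p ω₂ / mass p W (W ω₁)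
        = p ω₁ / mass p W (W ω₁) * ∑ ω₂ ∈ Finset.univ.filter (fun ω₂ => W ω₁ = W ω₂), p ω₂ := by
      rw [Finset.mul_sum]
      exact Finset.sum_congr rfl fun ω₂ _ => by ring
    have hmass : ∑ ω₂ ∈ Finset.univ.filter (fun ω₂ => W ω₁ = W ω₂), p ω₂ = mass p W (W ω₁) := by
      unfold mass
      exact Finset.sum_congr (Finset.filter_congr fun σ _ => eq_comm) fun _ _ => rfl
    rw [hfil, hmass, div_mul_cancel₀ _ hM]

lemma cpl_col (ω₂ : Ω) : ∑ ω₁, cpl p W (ω₁, ω₂) = p ω₂ := by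
  letI := Classical.decEq κ
  unfold cpl
  rw [← Finset.sum_filter]
  have hcong : ∀ ω₁ ∈ Finset.univ.filter (fun ω₁ => W ω₁ = W ω₂),
      p ω₁ * p ω₂ / mass p W (W ω₁) = p ω₂ / mass p W (W ω₂) * p ω₁ := by
    intro ω₁ hω₁
    rw [(Finset.mem_filter.mp hω₁).2]
    ring
  rw [Finset.sum_congr rfl hcong, ← Finset.mul_sum]
  have hmass : ∑ ω₁ ∈ Finset.univ.filter (fun ω₁ => W ω₁ = W ω₂), p ω₁ = mass p W (W ω₂) := rfl
  rw [hmass]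
  by_cases hM : mass p W (W ω₂) = 0
  · rw [hM, mul_zero]
    exact (mass_W_zero p W hp hM).symm
  · rw [div_mul_cancel₀ _ hM]

include hp1 in
lemma cpl_sum : ∑ ω', cpl p W ω' = 1 := by
  rw [Fintype.sum_prod_type]
  rw [Finset.sum_congr rfl fun ω₁ _ => cpl_row p W hp ω₁]
  exact hp1

lemma mass_cpl_fst {ι : Type*} (u : Ω → ι) (y : ι) :
    mass (cpl p W) (fun ω' => u ω'.1) y = mass p u y := by
  letI := Classical.decEq ι
  unfold mass
  rw [Finset.sum_filter, Fintype.sum_prod_type]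
  have step : ∀ ω₁ : Ω, (∑ ω₂, if u ω₁ = y then cpl p W (ω₁, ω₂) else 0)
      = if u ω₁ = y then p ω₁ else 0 := by
    intro ω₁
    by_cases hu : u ω₁ = y
    · simp only [hu, if_true]
      exact cpl_row p W hp ω₁
    · simp [hu]
  rw [Finset.sum_congr rfl fun ω₁ _ => step ω₁, ← Finset.sum_filter]

lemma mass_cpl_snd {ι : Type*} (u : Ω → ι) (y : ι) :
    mass (cpl p W) (fun ω' => u ω'.2) y = mass p u y := by
  letI := Classical.decEq ι
  unfold mass
  rw [Finset.sum_filter, Fintype.sum_prod_type, Finset.sum_comm]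
  have step : ∀ ω₂ : Ω, (∑ ω₁, if u ω₂ = y then cpl p W (ω₁, ω₂) else 0)
      = if u ω₂ = y then p ω₂ else 0 := by
    intro ω₂
    by_cases hu : u ω₂ = y
    · simp only [hu, if_true]
      exact cpl_col p W hp ω₂
    · simp [hu]
  rw [Finset.sum_congr rfl fun ω₂ _ => step ω₂, ← Finset.sum_filter]

omit hp in
lemma mass_cpl_congr {ι : Type*} {f g : Ω × Ω → ι}
    (h : ∀ ω', cpl p W ω' ≠ 0 → f ω' = g ω') (y : ι) :
    mass (cpl p W) f y = mass (cpl p W) g y := by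
  letI := Classical.decEq ι
  unfold mass
  rw [Finset.sum_filter, Finset.sum_filter]
  refine Finset.sum_congr rfl fun ω' _ => ?_
  by_cases hq : cpl p W ω' = 0
  · split <;> split <;> simp [hq]
  · rw [h ω' hq]

end coupling

section mix
variable {Ω κ ι α : Type*} [Fintype Ω] (p : Ω → ℝ) (W : Ω → κ)

lemma mass_cpl_mix (hp : ∀ ω, 0 ≤ p ω) (u : Ω → ι) (A : Ω → α)
    (href : ∀ σ τ, u σ = u τ → W σ = W τ) (ω' : Ω × Ω) :
    mass (cpl p W) (fun σ' => (u σ'.1, A σ'.2)) (u ω'.1, A ω'.2) =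
      mass p u (u ω'.1) * mass p (fun ω => (W ω, A ω)) (W ω'.1, A ω'.2) / mass p W (W ω'.1) := by
  letI := Classical.decEq κ
  letI := Classical.decEq ι
  letI := Classical.decEq α
  letI := Classical.decEq (ι × α)
  letI := Classical.decEq (κ × α)
  have L : mass (cpl p W) (fun σ' => (u σ'.1, A σ'.2)) (u ω'.1, A ω'.2) =
      ∑ σ₁, ∑ σ₂, (if (u σ₁, A σ₂) = (u ω'.1, A ω'.2) then cpl p W (σ₁, σ₂) else 0) := by
    unfold mass
    rw [Finset.sum_filter, Fintype.sum_prod_type]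
  rw [L]
  have step : ∀ σ₁, (∑ σ₂, if (u σ₁, A σ₂) = (u ω'.1, A ω'.2) then cpl p W (σ₁, σ₂) else 0)
      = (if u σ₁ = u ω'.1 then
          p σ₁ * mass p (fun ω => (W ω, A ω)) (W ω'.1, A ω'.2) / mass p W (W ω'.1) else 0) := by
    intro σ₁
    by_cases hu : u σ₁ = u ω'.1
    · have hW : W σ₁ = W ω'.1 := href _ _ hu
      rw [if_pos hu]
      have inner : ∀ σ₂, (if (u σ₁, A σ₂) = (u ω'.1, A ω'.2) then cpl p W (σ₁, σ₂) else 0)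
          = (if (W σ₂, A σ₂) = (W ω'.1, A ω'.2) then
              p σ₁ * p σ₂ / mass p W (W ω'.1) else 0) := by
        intro σ₂
        unfold cpl
        dsimp only
        by_cases hA : A σ₂ = A ω'.2
        · by_cases hW2 : W σ₂ = W ω'.1
          · rw [if_pos (by simp [hu, hA]), if_pos (by rw [hW, hW2]),
              if_pos (by simp [hW2, hA]), hW]
          · rw [if_pos (by simp [hu, hA]), if_neg (fun h => hW2 (by rw [← h, hW])),
              if_neg (by simp [hW2])]
        · rw [if_neg (by simp [hA]), if_neg (by simp [hA])]
      rw [Finset.sum_congr rfl fun σ₂ _ => inner σ₂, ← Finset.sum_filter]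
      have e : ∑ σ₂ ∈ Finset.univ.filter (fun σ₂ => (W σ₂, A σ₂) = (W ω'.1, A ω'.2)),
            p σ₁ * p σ₂ / mass p W (W ω'.1)
          = p σ₁ * (∑ σ₂ ∈ Finset.univ.filter (fun σ₂ => (W σ₂, A σ₂) = (W ω'.1, A ω'.2)), p σ₂)
              / mass p W (W ω'.1) := by
        rw [Finset.mul_sum, Finset.sum_div]
      rw [e]
      rfl
    · rw [if_neg hu]
      exact Finset.sum_eq_zero fun σ₂ _ => if_neg (by simp [hu])
  rw [Finset.sum_congr rfl fun σ₁ _ => step σ₁, ← Finset.sum_filter]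
  have e2 : ∑ σ₁ ∈ Finset.univ.filter (fun σ₁ => u σ₁ = u ω'.1),
        p σ₁ * mass p (fun ω => (W ω, A ω)) (W ω'.1, A ω'.2) / mass p W (W ω'.1)
      = (∑ σ₁ ∈ Finset.univ.filter (fun σ₁ => u σ₁ = u ω'.1), p σ₁) *
          mass p (fun ω => (W ω, A ω)) (W ω'.1, A ω'.2) / mass p W (W ω'.1) := by
    rw [Finset.sum_mul, Finset.sum_div]
  rw [e2]
  rfl

lemma cpl_CI [Fintype ι] [Fintype κ] [Fintype α]
    (hp : ∀ ω, 0 ≤ p ω) (u : Ω → ι) (A : Ω → α)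
    (href : ∀ σ τ, u σ = u τ → W σ = W τ) :
    entropy (cpl p W) (fun σ' => (u σ'.1, A σ'.2)) + entropy (cpl p W) (fun σ' => W σ'.1) =
      entropy (cpl p W) (fun σ' => u σ'.1) + entropy (cpl p W) (fun σ' => (W σ'.1, A σ'.2)) := by
  rw [entropy_eq_sum_omega, entropy_eq_sum_omega, entropy_eq_sum_omega, entropy_eq_sum_omega,
    ← Finset.sum_add_distrib, ← Finset.sum_add_distrib]
  refine Finset.sum_congr rfl fun ω' _ => ?_
  by_cases hq : cpl p W ω' = 0
  · simp [hq]
  · have hfacts : W ω'.1 = W ω'.2 ∧ p ω'.1 ≠ 0 ∧ p ω'.2 ≠ 0 ∧ mass p W (W ω'.1) ≠ 0 := by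
      revert hq
      unfold cpl
      split
      · intro hq
        refine ⟨‹_›, fun h => hq ?_, fun h => hq ?_, fun h => hq ?_⟩ <;> simp [h]
      · intro hq
        exact absurd rfl hq
    obtain ⟨hWW, hp1', hp2', hM'⟩ := hfacts
    have hppos1 : 0 < p ω'.1 := (hp _).lt_of_ne (Ne.symm hp1')
    have hppos2 : 0 < p ω'.2 := (hp _).lt_of_ne (Ne.symm hp2')
    have hu_pos : 0 < mass p u (u ω'.1) := mass_pos p u hp hppos1
    have hW_pos : 0 < mass p W (W ω'.1) := (mass_nonneg p W hp _).lt_of_ne (Ne.symm hM')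
    have hWA_pos : 0 < mass p (fun ω => (W ω, A ω)) (W ω'.1, A ω'.2) :=
      lt_of_lt_of_le hppos2 (le_mass p _ hp (show (W ω'.2, A ω'.2) = (W ω'.1, A ω'.2) by rw [hWW]))
    have e_WA : mass (cpl p W) (fun σ' => (W σ'.1, A σ'.2)) (W ω'.1, A ω'.2) =
        mass p (fun ω => (W ω, A ω)) (W ω'.1, A ω'.2) := by
      rw [mass_cpl_mix p W hp W A (fun _ _ h => h) ω', mul_comm, mul_div_assoc,
        div_self hM', mul_one]
    rw [mass_cpl_mix p W hp u A href ω', mass_cpl_fst p W hp W (W ω'.1),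
      mass_cpl_fst p W hp u (u ω'.1), e_WA,
      Real.logb_div (mul_pos hu_pos hWA_pos).ne' hW_pos.ne',
      Real.logb_mul hu_pos.ne' hWA_pos.ne']
    ring

end mix

section zy
open Finset

lemma zhang_yeung {Ω α β γ δ : Type*} [Fintype Ω] [Fintype α] [Fintype β] [Fintype γ] [Fintype δ]
    (p : Ω → ℝ) (hp : ∀ ω, 0 ≤ p ω) (hp1 : ∑ ω, p ω = 1)
    (A : Ω → α) (B : Ω → β) (X : Ω → γ) (Y : Ω → δ) :
    entropy p (fun ω => (A ω, B ω)) + 4 * entropy p (fun ω => (A ω, X ω, Y ω)) +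
      entropy p (fun ω => (B ω, X ω, Y ω)) + entropy p A + 2 * entropy p X + 2 * entropy p Y ≤
    3 * entropy p (fun ω => (X ω, Y ω)) + 3 * entropy p (fun ω => (A ω, X ω)) +
      3 * entropy p (fun ω => (A ω, Y ω)) + entropy p (fun ω => (B ω, X ω)) +
      entropy p (fun ω => (B ω, Y ω)) := by
  have hq0 : ∀ w1, 0 ≤ cpl p (fun ω => (X ω, Y ω)) w1 :=
    cpl_nonneg p (fun ω => (X ω, Y ω)) hp
  have hq1 : ∑ w1, cpl p (fun ω => (X ω, Y ω)) w1 = 1 :=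
    cpl_sum p (fun ω => (X ω, Y ω)) hp hp1
  have s0 : entropy (cpl p (fun ω => (X ω, Y ω))) (fun w1 => (X w1.1, (A w1.1, B w1.1, Y w1.1), A w1.2)) + entropy (cpl p (fun ω => (X ω, Y ω))) (fun w1 => (A w1.1, B w1.1, Y w1.1)) ≤
      entropy (cpl p (fun ω => (X ω, Y ω))) (fun w1 => (X w1.1, (A w1.1, B w1.1, Y w1.1))) + entropy (cpl p (fun ω => (X ω, Y ω))) (fun w1 => ((A w1.1, B w1.1, Y w1.1), A w1.2)) :=
    entropy_submod (cpl p (fun ω => (X ω, Y ω))) hq0 hq1 _ _ _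
  have rl0 : entropy (cpl p (fun ω => (X ω, Y ω))) (fun w1 => (X w1.1, (A w1.1, B w1.1, Y w1.1), A w1.2)) = entropy (cpl p (fun ω => (X ω, Y ω))) (fun w1 => (A w1.1, B w1.1, X w1.1, Y w1.1, A w1.2)) :=
    entropy_relabel _ _ _ (fun σ τ => by simp only [Prod.mk.injEq]; try tauto)
  have rl1 : entropy (cpl p (fun ω => (X ω, Y ω))) (fun w1 => (X w1.1, (A w1.1, B w1.1, Y w1.1))) = entropy (cpl p (fun ω => (X ω, Y ω))) (fun w1 => (A w1.1, B w1.1, X w1.1, Y w1.1)) :=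
    entropy_relabel _ _ _ (fun σ τ => by simp only [Prod.mk.injEq]; try tauto)
  have rl2 : entropy (cpl p (fun ω => (X ω, Y ω))) (fun w1 => ((A w1.1, B w1.1, Y w1.1), A w1.2)) = entropy (cpl p (fun ω => (X ω, Y ω))) (fun w1 => (A w1.1, B w1.1, Y w1.1, A w1.2)) :=
    entropy_relabel _ _ _ (fun σ τ => by simp only [Prod.mk.injEq]; try tauto)
  have s1 : entropy (cpl p (fun ω => (X ω, Y ω))) (fun w1 => (B w1.1, Y w1.1, A w1.2)) + entropy (cpl p (fun ω => (X ω, Y ω))) (fun w1 => Y w1.1) ≤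
      entropy (cpl p (fun ω => (X ω, Y ω))) (fun w1 => (B w1.1, Y w1.1)) + entropy (cpl p (fun ω => (X ω, Y ω))) (fun w1 => (Y w1.1, A w1.2)) :=
    entropy_submod (cpl p (fun ω => (X ω, Y ω))) hq0 hq1 _ _ _
  have s2 : entropy (cpl p (fun ω => (X ω, Y ω))) (fun w1 => (A w1.1, A w1.2, B w1.1)) + entropy (cpl p (fun ω => (X ω, Y ω))) (fun w1 => A w1.2) ≤
      entropy (cpl p (fun ω => (X ω, Y ω))) (fun w1 => (A w1.1, A w1.2)) + entropy (cpl p (fun ω => (X ω, Y ω))) (fun w1 => (A w1.2, B w1.1)) :=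
    entropy_submod (cpl p (fun ω => (X ω, Y ω))) hq0 hq1 _ _ _
  have rl3 : entropy (cpl p (fun ω => (X ω, Y ω))) (fun w1 => (A w1.1, A w1.2, B w1.1)) = entropy (cpl p (fun ω => (X ω, Y ω))) (fun w1 => (A w1.1, B w1.1, A w1.2)) :=
    entropy_relabel _ _ _ (fun σ τ => by simp only [Prod.mk.injEq]; try tauto)
  have rl4 : entropy (cpl p (fun ω => (X ω, Y ω))) (fun w1 => (A w1.2, B w1.1)) = entropy (cpl p (fun ω => (X ω, Y ω))) (fun w1 => (B w1.1, A w1.2)) :=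
    entropy_relabel _ _ _ (fun σ τ => by simp only [Prod.mk.injEq]; try tauto)
  have s3 : entropy (cpl p (fun ω => (X ω, Y ω))) (fun w1 => (X w1.1, (A w1.1, A w1.2), Y w1.1)) + entropy (cpl p (fun ω => (X ω, Y ω))) (fun w1 => (A w1.1, A w1.2)) ≤
      entropy (cpl p (fun ω => (X ω, Y ω))) (fun w1 => (X w1.1, (A w1.1, A w1.2))) + entropy (cpl p (fun ω => (X ω, Y ω))) (fun w1 => ((A w1.1, A w1.2), Y w1.1)) :=
    entropy_submod (cpl p (fun ω => (X ω, Y ω))) hq0 hq1 _ _ _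
  have rl5 : entropy (cpl p (fun ω => (X ω, Y ω))) (fun w1 => (X w1.1, (A w1.1, A w1.2), Y w1.1)) = entropy (cpl p (fun ω => (X ω, Y ω))) (fun w1 => (A w1.1, X w1.1, Y w1.1, A w1.2)) :=
    entropy_relabel _ _ _ (fun σ τ => by simp only [Prod.mk.injEq]; try tauto)
  have rl6 : entropy (cpl p (fun ω => (X ω, Y ω))) (fun w1 => (X w1.1, (A w1.1, A w1.2))) = entropy (cpl p (fun ω => (X ω, Y ω))) (fun w1 => (A w1.1, X w1.1, A w1.2)) :=
    entropy_relabel _ _ _ (fun σ τ => by simp only [Prod.mk.injEq]; try tauto)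
  have rl7 : entropy (cpl p (fun ω => (X ω, Y ω))) (fun w1 => ((A w1.1, A w1.2), Y w1.1)) = entropy (cpl p (fun ω => (X ω, Y ω))) (fun w1 => (A w1.1, Y w1.1, A w1.2)) :=
    entropy_relabel _ _ _ (fun σ τ => by simp only [Prod.mk.injEq]; try tauto)
  have s4 : entropy (cpl p (fun ω => (X ω, Y ω))) (fun w1 => (Y w1.1, (A w1.1, B w1.1), A w1.2)) + entropy (cpl p (fun ω => (X ω, Y ω))) (fun w1 => (A w1.1, B w1.1)) ≤
      entropy (cpl p (fun ω => (X ω, Y ω))) (fun w1 => (Y w1.1, (A w1.1, B w1.1))) + entropy (cpl p (fun ω => (X ω, Y ω))) (fun w1 => ((A w1.1, B w1.1), A w1.2)) :=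
    entropy_submod (cpl p (fun ω => (X ω, Y ω))) hq0 hq1 _ _ _
  have rl8 : entropy (cpl p (fun ω => (X ω, Y ω))) (fun w1 => (Y w1.1, (A w1.1, B w1.1), A w1.2)) = entropy (cpl p (fun ω => (X ω, Y ω))) (fun w1 => (A w1.1, B w1.1, Y w1.1, A w1.2)) :=
    entropy_relabel _ _ _ (fun σ τ => by simp only [Prod.mk.injEq]; try tauto)
  have rl9 : entropy (cpl p (fun ω => (X ω, Y ω))) (fun w1 => (Y w1.1, (A w1.1, B w1.1))) = entropy (cpl p (fun ω => (X ω, Y ω))) (fun w1 => (A w1.1, B w1.1, Y w1.1)) :=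
    entropy_relabel _ _ _ (fun σ τ => by simp only [Prod.mk.injEq]; try tauto)
  have rl10 : entropy (cpl p (fun ω => (X ω, Y ω))) (fun w1 => ((A w1.1, B w1.1), A w1.2)) = entropy (cpl p (fun ω => (X ω, Y ω))) (fun w1 => (A w1.1, B w1.1, A w1.2)) :=
    entropy_relabel _ _ _ (fun σ τ => by simp only [Prod.mk.injEq]; try tauto)
  have s5 : entropy (cpl p (fun ω => (X ω, Y ω))) (fun w1 => (A w1.1, X w1.1, A w1.2)) + entropy (cpl p (fun ω => (X ω, Y ω))) (fun w1 => X w1.1) ≤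
      entropy (cpl p (fun ω => (X ω, Y ω))) (fun w1 => (A w1.1, X w1.1)) + entropy (cpl p (fun ω => (X ω, Y ω))) (fun w1 => (X w1.1, A w1.2)) :=
    entropy_submod (cpl p (fun ω => (X ω, Y ω))) hq0 hq1 _ _ _
  have s6 : entropy (cpl p (fun ω => (X ω, Y ω))) (fun w1 => (X w1.1, (B w1.1, A w1.2), Y w1.1)) + entropy (cpl p (fun ω => (X ω, Y ω))) (fun w1 => (B w1.1, A w1.2)) ≤
      entropy (cpl p (fun ω => (X ω, Y ω))) (fun w1 => (X w1.1, (B w1.1, A w1.2))) + entropy (cpl p (fun ω => (X ω, Y ω))) (fun w1 => ((B w1.1, A w1.2), Y w1.1)) :=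
    entropy_submod (cpl p (fun ω => (X ω, Y ω))) hq0 hq1 _ _ _
  have rl11 : entropy (cpl p (fun ω => (X ω, Y ω))) (fun w1 => (X w1.1, (B w1.1, A w1.2), Y w1.1)) = entropy (cpl p (fun ω => (X ω, Y ω))) (fun w1 => (B w1.1, X w1.1, Y w1.1, A w1.2)) :=
    entropy_relabel _ _ _ (fun σ τ => by simp only [Prod.mk.injEq]; try tauto)
  have rl12 : entropy (cpl p (fun ω => (X ω, Y ω))) (fun w1 => (X w1.1, (B w1.1, A w1.2))) = entropy (cpl p (fun ω => (X ω, Y ω))) (fun w1 => (B w1.1, X w1.1, A w1.2)) :=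
    entropy_relabel _ _ _ (fun σ τ => by simp only [Prod.mk.injEq]; try tauto)
  have rl13 : entropy (cpl p (fun ω => (X ω, Y ω))) (fun w1 => ((B w1.1, A w1.2), Y w1.1)) = entropy (cpl p (fun ω => (X ω, Y ω))) (fun w1 => (B w1.1, Y w1.1, A w1.2)) :=
    entropy_relabel _ _ _ (fun σ τ => by simp only [Prod.mk.injEq]; try tauto)
  have s7 : entropy (cpl p (fun ω => (X ω, Y ω))) (fun w1 => (B w1.1, (A w1.1, X w1.1, Y w1.1), A w1.2)) + entropy (cpl p (fun ω => (X ω, Y ω))) (fun w1 => (A w1.1, X w1.1, Y w1.1)) ≤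
      entropy (cpl p (fun ω => (X ω, Y ω))) (fun w1 => (B w1.1, (A w1.1, X w1.1, Y w1.1))) + entropy (cpl p (fun ω => (X ω, Y ω))) (fun w1 => ((A w1.1, X w1.1, Y w1.1), A w1.2)) :=
    entropy_submod (cpl p (fun ω => (X ω, Y ω))) hq0 hq1 _ _ _
  have rl14 : entropy (cpl p (fun ω => (X ω, Y ω))) (fun w1 => (B w1.1, (A w1.1, X w1.1, Y w1.1), A w1.2)) = entropy (cpl p (fun ω => (X ω, Y ω))) (fun w1 => (A w1.1, B w1.1, X w1.1, Y w1.1, A w1.2)) :=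
    entropy_relabel _ _ _ (fun σ τ => by simp only [Prod.mk.injEq]; try tauto)
  have rl15 : entropy (cpl p (fun ω => (X ω, Y ω))) (fun w1 => (B w1.1, (A w1.1, X w1.1, Y w1.1))) = entropy (cpl p (fun ω => (X ω, Y ω))) (fun w1 => (A w1.1, B w1.1, X w1.1, Y w1.1)) :=
    entropy_relabel _ _ _ (fun σ τ => by simp only [Prod.mk.injEq]; try tauto)
  have rl16 : entropy (cpl p (fun ω => (X ω, Y ω))) (fun w1 => ((A w1.1, X w1.1, Y w1.1), A w1.2)) = entropy (cpl p (fun ω => (X ω, Y ω))) (fun w1 => (A w1.1, X w1.1, Y w1.1, A w1.2)) :=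
    entropy_relabel _ _ _ (fun σ τ => by simp only [Prod.mk.injEq]; try tauto)
  have s8 : entropy (cpl p (fun ω => (X ω, Y ω))) (fun w1 => (A w1.1, Y w1.1, A w1.2)) + entropy (cpl p (fun ω => (X ω, Y ω))) (fun w1 => Y w1.1) ≤
      entropy (cpl p (fun ω => (X ω, Y ω))) (fun w1 => (A w1.1, Y w1.1)) + entropy (cpl p (fun ω => (X ω, Y ω))) (fun w1 => (Y w1.1, A w1.2)) :=
    entropy_submod (cpl p (fun ω => (X ω, Y ω))) hq0 hq1 _ _ _
  have s9 : entropy (cpl p (fun ω => (X ω, Y ω))) (fun w1 => (B w1.1, X w1.1, A w1.2)) + entropy (cpl p (fun ω => (X ω, Y ω))) (fun w1 => X w1.1) ≤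
      entropy (cpl p (fun ω => (X ω, Y ω))) (fun w1 => (B w1.1, X w1.1)) + entropy (cpl p (fun ω => (X ω, Y ω))) (fun w1 => (X w1.1, A w1.2)) :=
    entropy_submod (cpl p (fun ω => (X ω, Y ω))) hq0 hq1 _ _ _
  have s10 : entropy (cpl p (fun ω => (X ω, Y ω))) (fun w1 => (A w1.1, (B w1.1, X w1.1, Y w1.1), A w1.2)) + entropy (cpl p (fun ω => (X ω, Y ω))) (fun w1 => (B w1.1, X w1.1, Y w1.1)) ≤
      entropy (cpl p (fun ω => (X ω, Y ω))) (fun w1 => (A w1.1, (B w1.1, X w1.1, Y w1.1))) + entropy (cpl p (fun ω => (X ω, Y ω))) (fun w1 => ((B w1.1, X w1.1, Y w1.1), A w1.2)) :=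
    entropy_submod (cpl p (fun ω => (X ω, Y ω))) hq0 hq1 _ _ _
  have rl17 : entropy (cpl p (fun ω => (X ω, Y ω))) (fun w1 => (A w1.1, (B w1.1, X w1.1, Y w1.1), A w1.2)) = entropy (cpl p (fun ω => (X ω, Y ω))) (fun w1 => (A w1.1, B w1.1, X w1.1, Y w1.1, A w1.2)) :=
    entropy_relabel _ _ _ (fun σ τ => by simp only [Prod.mk.injEq]; try tauto)
  have rl18 : entropy (cpl p (fun ω => (X ω, Y ω))) (fun w1 => (A w1.1, (B w1.1, X w1.1, Y w1.1))) = entropy (cpl p (fun ω => (X ω, Y ω))) (fun w1 => (A w1.1, B w1.1, X w1.1, Y w1.1)) :=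
    entropy_relabel _ _ _ (fun σ τ => by simp only [Prod.mk.injEq]; try tauto)
  have rl19 : entropy (cpl p (fun ω => (X ω, Y ω))) (fun w1 => ((B w1.1, X w1.1, Y w1.1), A w1.2)) = entropy (cpl p (fun ω => (X ω, Y ω))) (fun w1 => (B w1.1, X w1.1, Y w1.1, A w1.2)) :=
    entropy_relabel _ _ _ (fun σ τ => by simp only [Prod.mk.injEq]; try tauto)
  have ci : entropy (cpl p (fun ω => (X ω, Y ω))) (fun w1 => ((A w1.1, B w1.1, X w1.1, Y w1.1), A w1.2)) + entropy (cpl p (fun ω => (X ω, Y ω))) (fun w1 => (X w1.1, Y w1.1)) =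
      entropy (cpl p (fun ω => (X ω, Y ω))) (fun w1 => (A w1.1, B w1.1, X w1.1, Y w1.1)) + entropy (cpl p (fun ω => (X ω, Y ω))) (fun w1 => ((X w1.1, Y w1.1), A w1.2)) :=
    cpl_CI p (fun ω => (X ω, Y ω)) hp (fun ω => (A ω, B ω, X ω, Y ω)) A
      (fun σ τ h => by simp only [Prod.mk.injEq] at h ⊢; exact ⟨h.2.2.1, h.2.2.2⟩)
  have rl20 : entropy (cpl p (fun ω => (X ω, Y ω))) (fun w1 => ((A w1.1, B w1.1, X w1.1, Y w1.1), A w1.2)) = entropy (cpl p (fun ω => (X ω, Y ω))) (fun w1 => (A w1.1, B w1.1, X w1.1, Y w1.1, A w1.2)) :=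
    entropy_relabel _ _ _ (fun σ τ => by simp only [Prod.mk.injEq]; try tauto)
  have rl21 : entropy (cpl p (fun ω => (X ω, Y ω))) (fun w1 => ((X w1.1, Y w1.1), A w1.2)) = entropy (cpl p (fun ω => (X ω, Y ω))) (fun w1 => (X w1.1, Y w1.1, A w1.2)) :=
    entropy_relabel _ _ _ (fun σ τ => by simp only [Prod.mk.injEq]; try tauto)
  have trAB : entropy (cpl p (fun ω => (X ω, Y ω))) (fun w1 => (A w1.1, B w1.1)) = entropy p (fun ω => (A ω, B ω)) :=
    (entropy_congr_dist p _ (cpl p (fun ω => (X ω, Y ω))) _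
      (fun y => (mass_cpl_fst p (fun ω => (X ω, Y ω)) hp (fun ω => (A ω, B ω)) y).symm)).symm
  have trAXY : entropy (cpl p (fun ω => (X ω, Y ω))) (fun w1 => (A w1.1, X w1.1, Y w1.1)) = entropy p (fun ω => (A ω, X ω, Y ω)) :=
    (entropy_congr_dist p _ (cpl p (fun ω => (X ω, Y ω))) _
      (fun y => (mass_cpl_fst p (fun ω => (X ω, Y ω)) hp (fun ω => (A ω, X ω, Y ω)) y).symm)).symm
  have trBXY : entropy (cpl p (fun ω => (X ω, Y ω))) (fun w1 => (B w1.1, X w1.1, Y w1.1)) = entropy p (fun ω => (B ω, X ω, Y ω)) :=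
    (entropy_congr_dist p _ (cpl p (fun ω => (X ω, Y ω))) _
      (fun y => (mass_cpl_fst p (fun ω => (X ω, Y ω)) hp (fun ω => (B ω, X ω, Y ω)) y).symm)).symm
  have trA : entropy (cpl p (fun ω => (X ω, Y ω))) (fun w1 => A w1.1) = entropy p (A) :=
    (entropy_congr_dist p _ (cpl p (fun ω => (X ω, Y ω))) _
      (fun y => (mass_cpl_fst p (fun ω => (X ω, Y ω)) hp (A) y).symm)).symm
  have trX : entropy (cpl p (fun ω => (X ω, Y ω))) (fun w1 => X w1.1) = entropy p (X) :=
    (entropy_congr_dist p _ (cpl p (fun ω => (X ω, Y ω))) _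
      (fun y => (mass_cpl_fst p (fun ω => (X ω, Y ω)) hp (X) y).symm)).symm
  have trY : entropy (cpl p (fun ω => (X ω, Y ω))) (fun w1 => Y w1.1) = entropy p (Y) :=
    (entropy_congr_dist p _ (cpl p (fun ω => (X ω, Y ω))) _
      (fun y => (mass_cpl_fst p (fun ω => (X ω, Y ω)) hp (Y) y).symm)).symm
  have trXY : entropy (cpl p (fun ω => (X ω, Y ω))) (fun w1 => (X w1.1, Y w1.1)) = entropy p (fun ω => (X ω, Y ω)) :=
    (entropy_congr_dist p _ (cpl p (fun ω => (X ω, Y ω))) _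
      (fun y => (mass_cpl_fst p (fun ω => (X ω, Y ω)) hp (fun ω => (X ω, Y ω)) y).symm)).symm
  have trAX : entropy (cpl p (fun ω => (X ω, Y ω))) (fun w1 => (A w1.1, X w1.1)) = entropy p (fun ω => (A ω, X ω)) :=
    (entropy_congr_dist p _ (cpl p (fun ω => (X ω, Y ω))) _
      (fun y => (mass_cpl_fst p (fun ω => (X ω, Y ω)) hp (fun ω => (A ω, X ω)) y).symm)).symm
  have trAY : entropy (cpl p (fun ω => (X ω, Y ω))) (fun w1 => (A w1.1, Y w1.1)) = entropy p (fun ω => (A ω, Y ω)) :=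
    (entropy_congr_dist p _ (cpl p (fun ω => (X ω, Y ω))) _
      (fun y => (mass_cpl_fst p (fun ω => (X ω, Y ω)) hp (fun ω => (A ω, Y ω)) y).symm)).symm
  have trBX : entropy (cpl p (fun ω => (X ω, Y ω))) (fun w1 => (B w1.1, X w1.1)) = entropy p (fun ω => (B ω, X ω)) :=
    (entropy_congr_dist p _ (cpl p (fun ω => (X ω, Y ω))) _
      (fun y => (mass_cpl_fst p (fun ω => (X ω, Y ω)) hp (fun ω => (B ω, X ω)) y).symm)).symm
  have trBY : entropy (cpl p (fun ω => (X ω, Y ω))) (fun w1 => (B w1.1, Y w1.1)) = entropy p (fun ω => (B ω, Y ω)) :=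
    (entropy_congr_dist p _ (cpl p (fun ω => (X ω, Y ω))) _
      (fun y => (mass_cpl_fst p (fun ω => (X ω, Y ω)) hp (fun ω => (B ω, Y ω)) y).symm)).symm
  have hsupp : ∀ w1 : Ω × Ω, cpl p (fun ω => (X ω, Y ω)) w1 ≠ 0 →
      X w1.1 = X w1.2 ∧ Y w1.1 = Y w1.2 := by
    intro w1 hne
    have hW : (X w1.1, Y w1.1) = (X w1.2, Y w1.2) := by
      by_contra hc
      apply hne
      unfold cpl
      exact if_neg hc
    exact ⟨congrArg Prod.fst hW, congrArg Prod.snd hW⟩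
  have cpD : entropy (cpl p (fun ω => (X ω, Y ω))) (fun w1 => A w1.2) = entropy p A :=
    (entropy_congr_dist p _ (cpl p (fun ω => (X ω, Y ω))) _
      (fun y => (mass_cpl_snd p (fun ω => (X ω, Y ω)) hp A y).symm)).symm
  have cpXD : entropy (cpl p (fun ω => (X ω, Y ω))) (fun w1 => (X w1.1, A w1.2)) = entropy p (fun ω => (A ω, X ω)) := by
    have h1 : entropy (cpl p (fun ω => (X ω, Y ω))) (fun w1 => (X w1.1, A w1.2)) = entropy (cpl p (fun ω => (X ω, Y ω))) (fun w1 => (X w1.2, A w1.2)) :=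
      entropy_congr_dist (cpl p (fun ω => (X ω, Y ω))) _ (cpl p (fun ω => (X ω, Y ω))) _
        (fun y => mass_cpl_congr p (fun ω => (X ω, Y ω))
          (fun w1 hne => by
            obtain ⟨h1, h2⟩ := hsupp w1 hne
            simp only [Prod.mk.injEq]
            tauto) y)
    have h2 : entropy (cpl p (fun ω => (X ω, Y ω))) (fun w1 => (X w1.2, A w1.2)) = entropy p (fun ω => (X ω, A ω)) :=
      (entropy_congr_dist p _ (cpl p (fun ω => (X ω, Y ω))) _
        (fun y => (mass_cpl_snd p (fun ω => (X ω, Y ω)) hp (fun ω => (X ω, A ω)) y).symm)).symm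
    have h3 : entropy p (fun ω => (X ω, A ω)) = entropy p (fun ω => (A ω, X ω)) :=
      entropy_relabel _ _ _ (fun σ τ => by simp only [Prod.mk.injEq]; try tauto)
    rw [h1, h2, h3]
  have cpYD : entropy (cpl p (fun ω => (X ω, Y ω))) (fun w1 => (Y w1.1, A w1.2)) = entropy p (fun ω => (A ω, Y ω)) := by
    have h1 : entropy (cpl p (fun ω => (X ω, Y ω))) (fun w1 => (Y w1.1, A w1.2)) = entropy (cpl p (fun ω => (X ω, Y ω))) (fun w1 => (Y w1.2, A w1.2)) :=
      entropy_congr_dist (cpl p (fun ω => (X ω, Y ω))) _ (cpl p (fun ω => (X ω, Y ω))) _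
        (fun y => mass_cpl_congr p (fun ω => (X ω, Y ω))
          (fun w1 hne => by
            obtain ⟨h1, h2⟩ := hsupp w1 hne
            simp only [Prod.mk.injEq]
            tauto) y)
    have h2 : entropy (cpl p (fun ω => (X ω, Y ω))) (fun w1 => (Y w1.2, A w1.2)) = entropy p (fun ω => (Y ω, A ω)) :=
      (entropy_congr_dist p _ (cpl p (fun ω => (X ω, Y ω))) _
        (fun y => (mass_cpl_snd p (fun ω => (X ω, Y ω)) hp (fun ω => (Y ω, A ω)) y).symm)).symm
    have h3 : entropy p (fun ω => (Y ω, A ω)) = entropy p (fun ω => (A ω, Y ω)) :=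
      entropy_relabel _ _ _ (fun σ τ => by simp only [Prod.mk.injEq]; try tauto)
    rw [h1, h2, h3]
  have cpXYD : entropy (cpl p (fun ω => (X ω, Y ω))) (fun w1 => (X w1.1, Y w1.1, A w1.2)) = entropy p (fun ω => (A ω, X ω, Y ω)) := by
    have h1 : entropy (cpl p (fun ω => (X ω, Y ω))) (fun w1 => (X w1.1, Y w1.1, A w1.2)) = entropy (cpl p (fun ω => (X ω, Y ω))) (fun w1 => (X w1.2, Y w1.2, A w1.2)) :=
      entropy_congr_dist (cpl p (fun ω => (X ω, Y ω))) _ (cpl p (fun ω => (X ω, Y ω))) _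
        (fun y => mass_cpl_congr p (fun ω => (X ω, Y ω))
          (fun w1 hne => by
            obtain ⟨h1, h2⟩ := hsupp w1 hne
            simp only [Prod.mk.injEq]
            tauto) y)
    have h2 : entropy (cpl p (fun ω => (X ω, Y ω))) (fun w1 => (X w1.2, Y w1.2, A w1.2)) = entropy p (fun ω => (X ω, Y ω, A ω)) :=
      (entropy_congr_dist p _ (cpl p (fun ω => (X ω, Y ω))) _
        (fun y => (mass_cpl_snd p (fun ω => (X ω, Y ω)) hp (fun ω => (X ω, Y ω, A ω)) y).symm)).symm
    have h3 : entropy p (fun ω => (X ω, Y ω, A ω)) = entropy p (fun ω => (A ω, X ω, Y ω)) :=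
      entropy_relabel _ _ _ (fun σ τ => by simp only [Prod.mk.injEq]; try tauto)
    rw [h1, h2, h3]
  linarith

end zy

/-- The non-Shannon inequality (rearranged Zhang–Yeung plus Shannon steps):
`H[AB] + 4H[AXY] + H[BXY] + H[AC] + 2H[XC] + 2H[YC]
  ≤ 3H[XY] + 3H[AX] + 3H[AY] + H[BX] + H[BY] + 5H[C]`. -/
theorem non_shannon_five_vars {Ω α β γ δ ε : Type*} [Fintype Ω]
    [Fintype α] [Fintype β] [Fintype γ] [Fintype δ] [Fintype ε]
    (p : Ω → ℝ) (hp : ∀ ω, 0 ≤ p ω) (hp1 : ∑ ω, p ω = 1)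
    (A : Ω → α) (B : Ω → β) (X : Ω → γ) (Y : Ω → δ) (C : Ω → ε) :
    entropy p (fun ω => (A ω, B ω)) +
      4 * entropy p (fun ω => (A ω, X ω, Y ω)) +
      entropy p (fun ω => (B ω, X ω, Y ω)) +
      entropy p (fun ω => (A ω, C ω)) +
      2 * entropy p (fun ω => (X ω, C ω)) +
      2 * entropy p (fun ω => (Y ω, C ω)) ≤
    3 * entropy p (fun ω => (X ω, Y ω)) +
      3 * entropy p (fun ω => (A ω, X ω)) +
      3 * entropy p (fun ω => (A ω, Y ω)) +
      entropy p (fun ω => (B ω, X ω)) +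
      entropy p (fun ω => (B ω, Y ω)) +
      5 * entropy p C := by
  have zy := zhang_yeung p hp hp1 A B X Y
  have sAC := entropy_subadd p hp hp1 A C
  have sXC := entropy_subadd p hp hp1 X C
  have sYC := entropy_subadd p hp hp1 Y C
  linarith
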